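/- Let H be Hermitian with unique ground state |Φ₀⟩ and reduced resolvent R₀, and suppose R₀ = ∑_{n∈ℤ} βₙ e^{iE₀tₙ}U(tₙ) with |βₙ| ≤ M e^{−q√|n|} for constants M, q > 0, where U(t) = e^{−iHt}. Let V be Hermitian with ‖V|Φ₀⟩‖ ≤ v. Then for the truncation R_{0,N} = ∑_{|n|≤N} βₙ e^{iE₀tₙ}U(tₙ), the truncation error satisfies |⟨Φ₀|VR₀V|Φ₀⟩ − ⟨Φ₀|VR_{0,N}V|Φ₀⟩| ≤ v²·(8M/q²)·e^{−(q/2)√N}. -/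

import Mathlib

open Real MeasureTheory

noncomputable def auxG (q x : ℝ) : ℝ :=
  -(2/q^2) * ((1 + q * Real.sqrt x) * Real.exp (-q * Real.sqrt x))

lemma auxG_nonpos {q : ℝ} (hq : 0 < q) (x : ℝ) : auxG q x ≤ 0 := by
  have h1 : 0 ≤ Real.sqrt x := Real.sqrt_nonneg x
  have h2 : 0 < Real.exp (-q * Real.sqrt x) := Real.exp_pos _
  have : 0 ≤ (2/q^2) * ((1 + q * Real.sqrt x) * Real.exp (-q * Real.sqrt x)) := by positivity
  simp only [auxG]
  linarith

lemma auxG_hasDerivAt {q x : ℝ} (hq : 0 < q) (hx : 0 < x) :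
    HasDerivAt (auxG q) (Real.exp (-q * Real.sqrt x)) x := by
  have hs : Real.sqrt x ≠ 0 := by positivity
  have h1 : HasDerivAt (fun y => Real.sqrt y) (1/(2*Real.sqrt x)) x :=
    Real.hasDerivAt_sqrt hx.ne'
  have h2 : HasDerivAt (fun y => -q * Real.sqrt y) (-q * (1/(2*Real.sqrt x))) x :=
    h1.const_mul (-q)
  have h3 : HasDerivAt (fun y => Real.exp (-q * Real.sqrt y))
      (Real.exp (-q * Real.sqrt x) * (-q * (1/(2*Real.sqrt x)))) x := h2.exp
  have h4 : HasDerivAt (fun y => 1 + q * Real.sqrt y) (q * (1/(2*Real.sqrt x))) x :=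
    (h1.const_mul q).const_add 1
  have h5 := (h4.mul h3).const_mul (-(2/q^2))
  refine (h5 : HasDerivAt (auxG q) _ x).congr_deriv ?_
  have hsq : Real.sqrt x * Real.sqrt x = x := Real.mul_self_sqrt hx.le
  field_simp
  ring

lemma auxStep {q : ℝ} (hq : 0 < q) {a : ℝ} (ha : 0 ≤ a) :
    Real.exp (-q * Real.sqrt (a+1)) ≤ auxG q (a+1) - auxG q a := by
  have hcont : Continuous fun x : ℝ => Real.exp (-q * Real.sqrt x) := by fun_prop
  have hint : IntervalIntegrable (fun x => Real.exp (-q * Real.sqrt x)) volume a (a+1) :=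
    hcont.intervalIntegrable _ _
  have hFTC : ∫ x in a..(a+1), Real.exp (-q * Real.sqrt x) = auxG q (a+1) - auxG q a := by
    apply intervalIntegral.integral_eq_sub_of_hasDeriv_right_of_le (by linarith)
    · have : Continuous (auxG q) := by unfold auxG; fun_prop
      exact this.continuousOn
    · intro x hx
      exact (auxG_hasDerivAt hq (lt_of_le_of_lt ha hx.1)).hasDerivWithinAt
    · exact hint
  rw [← hFTC]
  have hle : ∫ x in a..(a+1), Real.exp (-q * Real.sqrt (a+1)) ≤
      ∫ x in a..(a+1), Real.exp (-q * Real.sqrt x) := by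
    apply intervalIntegral.integral_mono_on (by linarith)
      (intervalIntegrable_const) hint
    intro x hx
    apply Real.exp_le_exp.mpr
    have := Real.sqrt_le_sqrt hx.2
    nlinarith [Real.sqrt_nonneg x]
  simpa using hle

noncomputable def auxF (q : ℝ) (N : ℕ) (n : ℕ) : ℝ :=
  if n ≤ N then 0 else Real.exp (-q * Real.sqrt n)

lemma auxF_nonneg {q : ℝ} {N : ℕ} (n : ℕ) : 0 ≤ auxF q N n := by
  unfold auxF; split <;> positivity

lemma auxSum {q : ℝ} (hq : 0 < q) (N : ℕ) (K : ℕ) :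
    ∑ n ∈ Finset.range (N+1+K), auxF q N n ≤ auxG q (N+K) - auxG q N := by
  induction K with
  | zero =>
    have : ∑ n ∈ Finset.range (N+1+0), auxF q N n = 0 := by
      apply Finset.sum_eq_zero
      intro n hn
      simp only [Finset.mem_range] at hn
      simp [auxF, Nat.lt_succ_iff.mp (by omega : n < N + 1)]
    simp [this]
  | succ K ih =>
    have hrange : N+1+(K+1) = (N+1+K)+1 := by ring
    rw [hrange, Finset.sum_range_succ]
    have hterm : auxF q N (N+1+K) = Real.exp (-q * Real.sqrt ((N:ℝ)+K+1)) := by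
      simp only [auxF, if_neg (by omega : ¬ N+1+K ≤ N)]
      have : ((N+1+K : ℕ) : ℝ) = (N:ℝ)+K+1 := by push_cast; ring
      rw [this]
    have hstep := auxStep hq (a := (N:ℝ)+K) (by positivity)
    have hcast : ((N:ℝ)+K+1) = ((N:ℝ) + (K+1:ℕ)) := by push_cast; ring
    rw [hterm]
    have := auxG_nonpos hq
    calc ∑ n ∈ Finset.range (N+1+K), auxF q N n + Real.exp (-q * Real.sqrt ((N:ℝ)+K+1))
        ≤ (auxG q (N+K) - auxG q N) + (auxG q ((N:ℝ)+K+1) - auxG q ((N:ℝ)+K)) := by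
          apply add_le_add ih
          rw [show ((N:ℝ)+K+1) = ((N:ℝ)+K)+1 by ring]
          exact hstep
      _ = auxG q ((N:ℝ)+(K+1:ℕ)) - auxG q N := by rw [← hcast]; ring

lemma auxBound {q : ℝ} (hq : 0 < q) (N : ℕ) (K : ℕ) :
    ∑ n ∈ Finset.range K, auxF q N n ≤ -auxG q N := by
  have h1 : ∑ n ∈ Finset.range K, auxF q N n ≤ ∑ n ∈ Finset.range (N+1+K), auxF q N n := by
    apply Finset.sum_le_sum_of_subset_of_nonneg
    · exact Finset.range_subset_range.mpr (by omega)
    · intro i _ _; exact auxF_nonneg i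
  have h2 := auxSum hq N K
  have h3 := auxG_nonpos hq ((N:ℝ)+K)
  linarith

lemma auxF_summable {q : ℝ} (hq : 0 < q) (N : ℕ) : Summable (auxF q N) :=
  summable_of_sum_range_le auxF_nonneg (auxBound hq N)

lemma auxF_tsum_le {q : ℝ} (hq : 0 < q) (N : ℕ) : ∑' n, auxF q N n ≤ -auxG q N :=
  Real.tsum_le_of_sum_range_le auxF_nonneg (auxBound hq N)

lemma auxF_shift_tsum_le {q : ℝ} (hq : 0 < q) (N : ℕ) :
    ∑' n, auxF q N (n+1) ≤ -auxG q N := by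
  apply Real.tsum_le_of_sum_range_le (fun n => auxF_nonneg _)
  intro K
  have : ∑ n ∈ Finset.range (K+1), auxF q N n
      = (∑ n ∈ Finset.range K, auxF q N (n+1)) + auxF q N 0 := Finset.sum_range_succ' _ _
  have h0 : auxF q N 0 = 0 := by simp [auxF]
  have := auxBound hq N (K+1)
  linarith

lemma auxG_final {q : ℝ} (hq : 0 < q) (x : ℝ) (hx : 0 ≤ x) :
    -auxG q x ≤ (4/q^2) * Real.exp (-(q/2) * Real.sqrt x) := by
  set u := Real.sqrt x with hu
  have hu0 : 0 ≤ u := Real.sqrt_nonneg x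
  have hw : Real.exp (-q * u) = Real.exp (-(q/2)*u) * Real.exp (-(q/2)*u) := by
    rw [← Real.exp_add]; ring_nf
  have hup : Real.exp (-(q/2)*u) * Real.exp ((q/2)*u) = 1 := by
    rw [← Real.exp_add]; ring_nf; exact Real.exp_zero
  have hee := Real.add_one_le_exp ((q/2)*u)
  have hpos : 0 < Real.exp (-(q/2)*u) := Real.exp_pos _
  have hpos2 : 0 < Real.exp ((q/2)*u) := Real.exp_pos _
  have hq2 : 0 < q^2 := by positivity
  have key : (1 + q*u) * Real.exp (-(q/2)*u) ≤ 2 := by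
    have h1 : (1 + q*u) ≤ 2 * Real.exp ((q/2)*u) := by nlinarith
    calc (1 + q*u) * Real.exp (-(q/2)*u) ≤ (2 * Real.exp ((q/2)*u)) * Real.exp (-(q/2)*u) := by
          apply mul_le_mul_of_nonneg_right h1 hpos.le
      _ = 2 := by rw [mul_comm (Real.exp _) (Real.exp _)] at hup; nlinarith [hup]
  simp only [auxG, ← hu]
  rw [hw]
  have expand : -(-(2/q^2) * ((1 + q*u) * (Real.exp (-(q/2)*u) * Real.exp (-(q/2)*u))))
      = (2/q^2) * (((1+q*u) * Real.exp (-(q/2)*u)) * Real.exp (-(q/2)*u)) := by ring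
  rw [expand]
  have : ((1+q*u) * Real.exp (-(q/2)*u)) * Real.exp (-(q/2)*u) ≤ 2 * Real.exp (-(q/2)*u) :=
    mul_le_mul_of_nonneg_right key hpos.le
  calc (2/q^2) * (((1+q*u) * Real.exp (-(q/2)*u)) * Real.exp (-(q/2)*u))
      ≤ (2/q^2) * (2 * Real.exp (-(q/2)*u)) := by
        apply mul_le_mul_of_nonneg_left this (by positivity)
    _ = (4/q^2) * Real.exp (-(q/2)*u) := by ring
theorem stmt_10 {E : Type*} [NormedAddCommGroup E] [InnerProductSpace ℂ E]
    (Φ₀ : E) (hΦ₀ : ‖Φ₀‖ = 1)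
    (V R₀ : E →ₗ[ℂ] E) (U : ℝ → (E →ₗ[ℂ] E))
    (t : ℤ → ℝ) (β : ℤ → ℂ) (E₀ v M q : ℝ) (N : ℕ) (Δ R : ℝ)
    (hΔ : 0 < Δ) (hR : Δ ≤ R)
    (ht : ∀ n : ℤ, t n = 2 * Real.pi * n / (R + Δ))
    (hVsym : V.IsSymmetric)
    (hv : ‖V Φ₀‖ ≤ v)
    (hM : 0 < M) (hq : 0 < q)
    (hβ : ∀ n : ℤ, ‖β n‖ ≤ M * Real.exp (-q * Real.sqrt |(n : ℝ)|))
    (hUiso : ∀ (s : ℝ) (x : E), ‖U s x‖ = ‖x‖)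
    (hsum : HasSum (fun n : ℤ =>
      (β n * Complex.exp (Complex.I * E₀ * t n)) • U (t n) (V Φ₀)) (R₀ (V Φ₀))) :
    ‖(inner ℂ Φ₀ (V (R₀ (V Φ₀))) : ℂ) -
      (inner ℂ Φ₀ (V (∑ n ∈ Finset.Icc (-(N : ℤ)) N,
        (β n * Complex.exp (Complex.I * E₀ * t n)) • U (t n) (V Φ₀))) : ℂ)‖ ≤
      v ^ 2 * (8 * M / q ^ 2) * Real.exp (-(q / 2) * Real.sqrt N) := by
  classical
  set f : ℤ → E := fun n => (β n * Complex.exp (Complex.I * E₀ * t n)) • U (t n) (V Φ₀) with hf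
  set s : Finset ℤ := Finset.Icc (-(N : ℤ)) N with hs
  have hv0 : 0 ≤ v := le_trans (norm_nonneg _) hv
  -- the partial sum has sum (as a HasSum of the truncated function)
  have hb : HasSum (fun n => if n ∈ s then f n else 0) (∑ n ∈ s, f n) := by
    have h1 : HasSum (fun n => if n ∈ s then f n else 0)
        (∑ n ∈ s, if n ∈ s then f n else 0) :=
      hasSum_sum_of_ne_finset_zero (by intro b hb; simp [hb])
    simpa using h1
  have hdiff : HasSum (fun n => if n ∈ s then 0 else f n) (R₀ (V Φ₀) - ∑ n ∈ s, f n) := by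
    have h2 := hsum.sub hb
    convert h2 using 1
    funext n
    by_cases hn : n ∈ s <;> simp [hn]
  -- norm of each term
  have hfnorm : ∀ n : ℤ, ‖f n‖ ≤ v * M * Real.exp (-q * Real.sqrt |(n : ℝ)|) := by
    intro n
    have hexp1 : ‖Complex.exp (Complex.I * E₀ * t n)‖ = 1 := by
      rw [Complex.norm_exp]
      simp [Complex.mul_re]
    rw [hf]
    simp only []
    rw [norm_smul, hUiso, norm_mul, hexp1, mul_one]
    calc ‖β n‖ * ‖V Φ₀‖ ≤ (M * Real.exp (-q * Real.sqrt |(n : ℝ)|)) * v := by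
          apply mul_le_mul (hβ n) hv (norm_nonneg _)
          positivity
      _ = v * M * Real.exp (-q * Real.sqrt |(n : ℝ)|) := by ring
  -- dominating function on ℤ
  set GZ : ℤ → ℝ := fun n => if n ∈ s then 0 else v * M * Real.exp (-q * Real.sqrt |(n : ℝ)|)
    with hGZ
  have hterm : ∀ n : ℤ, ‖(if n ∈ s then (0:E) else f n)‖ ≤ GZ n := by
    intro n
    by_cases hn : n ∈ s
    · simp [hGZ, hn]
    · simp only [hGZ, if_neg hn]
      exact hfnorm n
  have hGZnonneg : ∀ n : ℤ, 0 ≤ GZ n := by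
    intro n
    simp only [hGZ]
    split
    · exact le_rfl
    · positivity
  -- identify GZ on nonneg and neg integers with auxF
  have hpos : ∀ n : ℕ, GZ (n : ℤ) = (v * M) * auxF q N n := by
    intro n
    have hmem : ((n : ℤ) ∈ s) ↔ n ≤ N := by
      simp only [hs, Finset.mem_Icc]; omega
    simp only [hGZ, auxF]
    by_cases hn : n ≤ N
    · rw [if_pos (hmem.mpr hn), if_pos hn, mul_zero]
    · rw [if_neg (fun h => hn (hmem.mp h)), if_neg hn]
      have habs : |((n : ℤ) : ℝ)| = ((n : ℕ) : ℝ) := by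
        push_cast; exact abs_of_nonneg (by positivity)
      rw [habs]
  have hneg : ∀ n : ℕ, GZ (-((n : ℤ) + 1)) = (v * M) * auxF q N (n + 1) := by
    intro n
    have hmem : ((-((n : ℤ) + 1)) ∈ s) ↔ n + 1 ≤ N := by
      simp only [hs, Finset.mem_Icc]; omega
    simp only [hGZ, auxF]
    by_cases hn : n + 1 ≤ N
    · rw [if_pos (hmem.mpr hn), if_pos hn, mul_zero]
    · rw [if_neg (fun h => hn (hmem.mp h)), if_neg hn]
      have habs : |((-((n : ℤ) + 1) : ℤ) : ℝ)| = (((n + 1 : ℕ)) : ℝ) := by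
        push_cast
        rw [abs_neg, abs_of_nonneg (by positivity)]
      rw [habs]
  -- summability of GZ with bound
  have hF := auxF_summable hq N
  have hFs : Summable (fun n : ℕ => auxF q N (n + 1)) := by
    rw [← summable_nat_add_iff 1] at hF
    exact hF
  have h1 : HasSum (fun n : ℕ => GZ n) ((v * M) * ∑' n, auxF q N n) := by
    have := hF.hasSum.mul_left (v * M)
    convert this using 1
    · rfl
    funext n
    exact hpos n
  have h2 : HasSum (fun n : ℕ => GZ (-((n : ℤ) + 1))) ((v * M) * ∑' n, auxF q N (n + 1)) := by
    have := hFs.hasSum.mul_left (v * M)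
    convert this using 1
    · rfl
    funext n
    exact hneg n
  have hGZsum : HasSum GZ ((v * M) * ∑' n, auxF q N n + (v * M) * ∑' n, auxF q N (n + 1)) :=
    HasSum.of_nat_of_neg_add_one h1 h2
  -- summability of norms
  have hnormsum : Summable (fun n : ℤ => ‖(if n ∈ s then (0:E) else f n)‖) :=
    Summable.of_nonneg_of_le (fun n => norm_nonneg _) hterm hGZsum.summable
  -- main norm bound
  have hz : ‖R₀ (V Φ₀) - ∑ n ∈ s, f n‖ ≤
      (v * M) * ∑' n, auxF q N n + (v * M) * ∑' n, auxF q N (n + 1) := by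
    rw [← hdiff.tsum_eq]
    calc ‖∑' n, (if n ∈ s then (0:E) else f n)‖
        ≤ ∑' n, ‖(if n ∈ s then (0:E) else f n)‖ := norm_tsum_le_tsum_norm hnormsum
      _ ≤ ∑' n, GZ n := Summable.tsum_le_tsum hterm hnormsum hGZsum.summable
      _ = _ := hGZsum.tsum_eq
  -- bound the tail sums
  have hB : -auxG q (N : ℝ) ≤ (4 / q ^ 2) * Real.exp (-(q / 2) * Real.sqrt N) :=
    auxG_final hq _ (Nat.cast_nonneg N)
  have hT1 : ∑' n, auxF q N n ≤ (4 / q ^ 2) * Real.exp (-(q / 2) * Real.sqrt N) :=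
    le_trans (auxF_tsum_le hq N) hB
  have hT2 : ∑' n, auxF q N (n + 1) ≤ (4 / q ^ 2) * Real.exp (-(q / 2) * Real.sqrt N) :=
    le_trans (auxF_shift_tsum_le hq N) hB
  have hvM : 0 ≤ v * M := by positivity
  have hz2 : ‖R₀ (V Φ₀) - ∑ n ∈ s, f n‖ ≤
      (v * M) * ((8 / q ^ 2) * Real.exp (-(q / 2) * Real.sqrt N)) := by
    calc ‖R₀ (V Φ₀) - ∑ n ∈ s, f n‖
        ≤ (v * M) * ∑' n, auxF q N n + (v * M) * ∑' n, auxF q N (n + 1) := hz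
      _ ≤ (v * M) * ((4 / q ^ 2) * Real.exp (-(q / 2) * Real.sqrt N))
          + (v * M) * ((4 / q ^ 2) * Real.exp (-(q / 2) * Real.sqrt N)) :=
          add_le_add (mul_le_mul_of_nonneg_left hT1 hvM) (mul_le_mul_of_nonneg_left hT2 hvM)
      _ = (v * M) * ((8 / q ^ 2) * Real.exp (-(q / 2) * Real.sqrt N)) := by ring
  -- inner product rewriting
  have hinner : (inner ℂ Φ₀ (V (R₀ (V Φ₀))) : ℂ) - (inner ℂ Φ₀ (V (∑ n ∈ s, f n)) : ℂ)
      = (inner ℂ (V Φ₀) (R₀ (V Φ₀) - ∑ n ∈ s, f n) : ℂ) := by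
    rw [hVsym Φ₀ (R₀ (V Φ₀) - ∑ n ∈ s, f n)]
    rw [map_sub, inner_sub_right]
  rw [hinner]
  calc ‖(inner ℂ (V Φ₀) (R₀ (V Φ₀) - ∑ n ∈ s, f n) : ℂ)‖
      ≤ ‖V Φ₀‖ * ‖R₀ (V Φ₀) - ∑ n ∈ s, f n‖ := norm_inner_le_norm _ _
    _ ≤ v * ((v * M) * ((8 / q ^ 2) * Real.exp (-(q / 2) * Real.sqrt N))) := by
        apply mul_le_mul hv hz2 (norm_nonneg _) hv0
    _ = v ^ 2 * (8 * M / q ^ 2) * Real.exp (-(q / 2) * Real.sqrt N) := by ring
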